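/- Let q be a prime power and let A(X) ∈ 𝔽_q[X] have pseudodegree at most k and degree at most D. Then there exist polynomials Â_0(X), Â_1(X), …, Â_{⌊D/q⌋}(X) ∈ 𝔽_q[X], each of degree at most k + ⌊D/q⌋, such that A(X) = Σ_{i=0}^{⌊D/q⌋} Â_i(X)·X^{iq}. -/

import Mathlib

open Polynomial

/-- `A ∈ 𝔽_q[X]` has pseudodegree at most `k`: for every `ℓ ≥ 0`, the remainder of the
`ℓ`-th Hasse derivative of `A` upon division by `Λ(X) = X^q - X` has degree at most `k`. -/
def PdegLE {F : Type*} [Field F] (q : ℕ) (A : F[X]) (k : ℕ) : Prop :=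
  ∀ ℓ : ℕ, ((hasseDeriv ℓ A) %ₘ (X ^ q - X)).degree ≤ (k : WithBot ℕ)

section Aux

open Finset

variable {F : Type*} [Field F]

lemma degree_hasseDeriv_le' (a : ℕ) (f : F[X]) : (hasseDeriv a f).degree ≤ f.degree := by
  by_cases h : hasseDeriv a f = 0
  · simp [h]
  · have hf : f ≠ 0 := by rintro rfl; simp at h
    rw [degree_eq_natDegree h, degree_eq_natDegree hf]
    exact_mod_cast le_trans (Polynomial.natDegree_hasseDeriv_le f a) (Nat.sub_le _ _)

lemma hd_lambda (p e q : ℕ) (hp : p.Prime) [CharP F p] (he : e ≠ 0) (hqe : q = p ^ e) (d : ℕ) :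
    hasseDeriv d (X ^ q - X : F[X]) =
      C ((X ^ q - X : F[X]).coeff d) + if d = 0 then X ^ q - X else 0 := by
  have hq2 : 1 < q := hqe ▸ Nat.one_lt_pow he hp.one_lt
  have hXq : hasseDeriv d ((X : F[X]) ^ q) = monomial (q - d) ((q.choose d : F)) := by
    rw [X_pow_eq_monomial, hasseDeriv_monomial, mul_one]
  have hco : (X ^ q - X : F[X]).coeff d = (if d = q then 1 else 0) - (if 1 = d then 1 else 0) := by
    simp [coeff_X_pow, coeff_X]
  rcases Nat.lt_or_ge d 2 with hd | hd
  · interval_cases d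
    · rw [hasseDeriv_zero', hco, if_neg (by omega : ¬ (0:ℕ) = q), if_neg (by omega : ¬ (1:ℕ) = 0),
        if_pos rfl]
      simp
    · have hq0 : (q : F) = 0 := by
        rw [hqe]; push_cast; rw [CharP.cast_eq_zero F p]; exact zero_pow he
      rw [map_sub, hXq, hasseDeriv_one', derivative_X, hco, if_neg (by omega : ¬ (1:ℕ) = q),
        if_pos rfl, if_neg (by omega : ¬ (1:ℕ) = 0), Nat.choose_one_right, hq0, monomial_zero_right]
      simp
  · rw [map_sub, hXq, hasseDeriv_X _ (by omega : 1 < d), sub_zero, hco,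
      if_neg (by omega : ¬ (1:ℕ) = d), if_neg (by omega : ¬ d = 0)]
    rcases eq_or_ne d q with rfl | hdq
    · rw [if_pos rfl, Nat.choose_self, Nat.sub_self]
      simp
    · have hc : ((q.choose d : F)) = 0 := by
        rcases Nat.lt_or_ge q d with h | h
        · simp [Nat.choose_eq_zero_of_lt h]
        · have hdvd : p ∣ q.choose d := by
            rw [hqe]
            exact hp.dvd_choose_pow (by omega) (by rw [← hqe]; omega)
          exact_mod_cast (CharP.cast_eq_zero_iff F p _).2 hdvd
      rw [if_neg hdq]
      simp [hc]

lemma dvd_hd_pow (p e q : ℕ) (hp : p.Prime) [CharP F p] (he : e ≠ 0) (hqe : q = p ^ e)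
    (i : ℕ) : ∀ d : ℕ,
    (X ^ q - X : F[X]) ∣
      hasseDeriv d ((X ^ q - X : F[X]) ^ i) - C (((X ^ q - X : F[X]) ^ i).coeff d) := by
  induction i with
  | zero =>
    intro d
    rcases eq_or_ne d 0 with rfl | hd
    · simp [hasseDeriv_zero']
    · simp [pow_zero, hasseDeriv_apply_one _ (Nat.pos_of_ne_zero hd), coeff_one, hd]
  | succ i ih =>
    intro d
    rw [pow_succ, hasseDeriv_mul, coeff_mul, map_sum, ← Finset.sum_sub_distrib]
    apply Finset.dvd_sum
    rintro ⟨a, b⟩ hab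
    have h2 : hasseDeriv b (X ^ q - X : F[X]) - C ((X ^ q - X : F[X]).coeff b)
        = if b = 0 then (X ^ q - X : F[X]) else 0 := by
      rw [hd_lambda p e q hp he hqe b, add_sub_cancel_left]
    have key : hasseDeriv a ((X ^ q - X : F[X]) ^ i) * hasseDeriv b (X ^ q - X : F[X])
          - C (((X ^ q - X : F[X]) ^ i).coeff a * (X ^ q - X : F[X]).coeff b)
        = (hasseDeriv a ((X ^ q - X : F[X]) ^ i) - C (((X ^ q - X : F[X]) ^ i).coeff a))
            * hasseDeriv b (X ^ q - X : F[X])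
          + C (((X ^ q - X : F[X]) ^ i).coeff a)
            * (hasseDeriv b (X ^ q - X : F[X]) - C ((X ^ q - X : F[X]).coeff b)) := by
      rw [C_mul]; ring
    rw [key]
    refine dvd_add ((ih a).mul_right _) (Dvd.dvd.mul_left ?_ _)
    rw [h2]
    split_ifs
    · exact dvd_rfl
    · exact dvd_zero _

noncomputable def Rseq (Λ A : F[X]) : ℕ → F[X]
  | 0 => A
  | n+1 => Rseq Λ A n /ₘ Λ

noncomputable def Bseq (Λ A : F[X]) (i : ℕ) : F[X] := Rseq Λ A i %ₘ Λ

lemma decomp (Λ A : F[X]) (hΛ : Λ.Monic) (n : ℕ) :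
    A = (∑ i ∈ range n, Bseq Λ A i * Λ ^ i) + Rseq Λ A n * Λ ^ n := by
  induction n with
  | zero => simp [Rseq]
  | succ n ih =>
    rw [sum_range_succ]
    have h := modByMonic_add_div (Rseq Λ A n) Λ
    have h2 : Bseq Λ A n * Λ ^ n + Rseq Λ A (n+1) * Λ ^ (n+1) = Rseq Λ A n * Λ ^ n := by
      rw [Bseq, Rseq, pow_succ]
      linear_combination (Λ ^ n) * h
    rw [add_assoc, h2]
    exact ih

lemma degree_Rseq_le (Λ A : F[X]) (hΛ : Λ.Monic) (q D : ℕ) (hdΛ : Λ.natDegree = q)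
    (hA : A.degree ≤ (D : ℕ)) : ∀ n, (Rseq Λ A n).degree ≤ ((D - n * q : ℕ) : WithBot ℕ) := by
  intro n; induction n with
  | zero => simpa [Rseq] using hA
  | succ n ih =>
    by_cases h0 : Rseq Λ A (n+1) = 0
    · simp [h0]
    · rw [degree_eq_natDegree h0]
      have hnd : (Rseq Λ A (n+1)).natDegree = (Rseq Λ A n).natDegree - q := by
        rw [Rseq, natDegree_divByMonic _ hΛ, hdΛ]
      have h2 : (Rseq Λ A n).natDegree ≤ D - n * q := natDegree_le_iff_degree_le.mpr ih
      rw [hnd]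
      have h3 : (n+1) * q = n * q + q := by ring
      exact_mod_cast (by omega : (Rseq Λ A n).natDegree - q ≤ D - (n+1) * q)

lemma Rseq_eq_zero (Λ A : F[X]) (hΛ : Λ.Monic) (q D : ℕ) (hq : 0 < q) (hdΛ : Λ.natDegree = q)
    (hA : A.degree ≤ (D : ℕ)) : Rseq Λ A (D / q + 1) = 0 := by
  rw [Rseq, divByMonic_eq_zero_iff hΛ, degree_eq_natDegree hΛ.ne_zero, hdΛ]
  have h1 := degree_Rseq_le Λ A hΛ q D hdΛ hA (D / q)
  refine lt_of_le_of_lt h1 ?_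
  have h2 : q * (D / q) + D % q = D := Nat.div_add_mod D q
  have h3 : D / q * q = q * (D / q) := mul_comm _ _
  have h4 : D % q < q := Nat.mod_lt D hq
  exact_mod_cast (by omega : D - D / q * q < q)

lemma lam_pow_coeff_lt (q : ℕ) (hq : 1 < q) (i b : ℕ) (hb : b < i) :
    (((X:F[X]) ^ q - X) ^ i).coeff b = 0 := by
  have hfac : ((X:F[X]) ^ q - X) = (X ^ (q-1) - 1) * X := by
    rw [sub_mul, one_mul, ← pow_succ]
    congr 2
    omega
  rw [hfac, mul_pow, coeff_mul_X_pow', if_neg (by omega)]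

lemma lam_pow_coeff_self (q : ℕ) (hq : 1 < q) (i : ℕ) :
    (((X:F[X]) ^ q - X) ^ i).coeff i = (-1) ^ i := by
  have hfac : ((X:F[X]) ^ q - X) = (X ^ (q-1) - 1) * X := by
    rw [sub_mul, one_mul, ← pow_succ]
    congr 2
    omega
  rw [hfac, mul_pow, coeff_mul_X_pow', if_pos le_rfl, Nat.sub_self, coeff_zero_eq_eval_zero]
  simp [zero_pow (by omega : q - 1 ≠ 0)]

lemma Sl_eq (p e q : ℕ) (hp : p.Prime) [CharP F p] (he : e ≠ 0) (hqe : q = p ^ e)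
    (hΛ : (X ^ q - X : F[X]).Monic) (hdΛ : (X ^ q - X : F[X]).degree = (q : ℕ))
    (A : F[X]) (m : ℕ)
    (hA : A = ∑ i ∈ range (m+1), Bseq (X ^ q - X) A i * (X ^ q - X) ^ i) (ℓ : ℕ) :
    hasseDeriv ℓ A %ₘ (X ^ q - X) =
      ∑ i ∈ range (m+1), ∑ ab ∈ antidiagonal ℓ,
        C ((((X : F[X]) ^ q - X) ^ i).coeff ab.2)
          * hasseDeriv ab.1 (Bseq (X ^ q - X) A i) := by
  have h1 : hasseDeriv ℓ A = ∑ i ∈ range (m+1), ∑ ab ∈ antidiagonal ℓ,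
      hasseDeriv ab.1 (Bseq (X ^ q - X) A i) * hasseDeriv ab.2 ((X ^ q - X : F[X]) ^ i) := by
    conv_lhs => rw [hA]
    rw [map_sum]
    exact Finset.sum_congr rfl fun i _ => by rw [hasseDeriv_mul]
  have hdvd1 : (X ^ q - X : F[X]) ∣ hasseDeriv ℓ A -
      ∑ i ∈ range (m+1), ∑ ab ∈ antidiagonal ℓ,
        C ((((X : F[X]) ^ q - X) ^ i).coeff ab.2) * hasseDeriv ab.1 (Bseq (X ^ q - X) A i) := by
    rw [h1, ← Finset.sum_sub_distrib]
    refine Finset.dvd_sum fun i _ => ?_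
    rw [← Finset.sum_sub_distrib]
    refine Finset.dvd_sum fun ab _ => ?_
    have key : hasseDeriv ab.1 (Bseq (X ^ q - X) A i) * hasseDeriv ab.2 ((X ^ q - X : F[X]) ^ i)
        - C ((((X : F[X]) ^ q - X) ^ i).coeff ab.2) * hasseDeriv ab.1 (Bseq (X ^ q - X) A i)
        = hasseDeriv ab.1 (Bseq (X ^ q - X) A i)
            * (hasseDeriv ab.2 ((X ^ q - X : F[X]) ^ i)
              - C ((((X : F[X]) ^ q - X) ^ i).coeff ab.2)) := by ring
    rw [key]
    exact (dvd_hd_pow p e q hp he hqe i ab.2).mul_left _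
  have hdvd2 : (X ^ q - X : F[X]) ∣ hasseDeriv ℓ A - hasseDeriv ℓ A %ₘ (X ^ q - X) := by
    have h := modByMonic_add_div (hasseDeriv ℓ A) (X ^ q - X)
    exact ⟨hasseDeriv ℓ A /ₘ (X ^ q - X), by linear_combination -h⟩
  have hdvd3 : (X ^ q - X : F[X]) ∣ hasseDeriv ℓ A %ₘ (X ^ q - X) -
      ∑ i ∈ range (m+1), ∑ ab ∈ antidiagonal ℓ,
        C ((((X : F[X]) ^ q - X) ^ i).coeff ab.2) * hasseDeriv ab.1 (Bseq (X ^ q - X) A i) := by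
    have h := dvd_sub hdvd1 hdvd2
    have heq : hasseDeriv ℓ A -
        (∑ i ∈ range (m+1), ∑ ab ∈ antidiagonal ℓ,
          C ((((X : F[X]) ^ q - X) ^ i).coeff ab.2) * hasseDeriv ab.1 (Bseq (X ^ q - X) A i))
        - (hasseDeriv ℓ A - hasseDeriv ℓ A %ₘ (X ^ q - X))
        = hasseDeriv ℓ A %ₘ (X ^ q - X) -
        ∑ i ∈ range (m+1), ∑ ab ∈ antidiagonal ℓ,
          C ((((X : F[X]) ^ q - X) ^ i).coeff ab.2)
            * hasseDeriv ab.1 (Bseq (X ^ q - X) A i) := by ring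
    rwa [heq] at h
  have hBq : ∀ i, (Bseq (X ^ q - X) A i).degree < ((q : ℕ) : WithBot ℕ) := fun i => by
    rw [← hdΛ]
    exact degree_modByMonic_lt _ hΛ
  have hSdeg : (∑ i ∈ range (m+1), ∑ ab ∈ antidiagonal ℓ,
      C ((((X : F[X]) ^ q - X) ^ i).coeff ab.2)
        * hasseDeriv ab.1 (Bseq (X ^ q - X) A i)).degree < ((q : ℕ) : WithBot ℕ) := by
    refine lt_of_le_of_lt (degree_sum_le _ _) ?_
    rw [Finset.sup_lt_iff (by exact WithBot.bot_lt_coe q)]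
    intro i _
    refine lt_of_le_of_lt (degree_sum_le _ _) ?_
    rw [Finset.sup_lt_iff (by exact WithBot.bot_lt_coe q)]
    intro ab _
    calc (C ((((X : F[X]) ^ q - X) ^ i).coeff ab.2)
            * hasseDeriv ab.1 (Bseq (X ^ q - X) A i)).degree
        ≤ (hasseDeriv ab.1 (Bseq (X ^ q - X) A i)).degree := by
          rw [← smul_eq_C_mul]; exact degree_smul_le _ _
      _ ≤ (Bseq (X ^ q - X) A i).degree := degree_hasseDeriv_le' _ _
      _ < _ := hBq i
  have hmod : (hasseDeriv ℓ A %ₘ (X ^ q - X)).degree < ((q : ℕ) : WithBot ℕ) := by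
    rw [← hdΛ]; exact degree_modByMonic_lt _ hΛ
  have hz := eq_zero_of_dvd_of_degree_lt hdvd3
    (lt_of_le_of_lt (degree_sub_le _ _) (by rw [hdΛ]; exact max_lt hmod hSdeg))
  exact sub_eq_zero.mp hz

lemma degree_Bseq_le (p e q : ℕ) (hp : p.Prime) [CharP F p] (he : e ≠ 0) (hqe : q = p ^ e)
    (hΛ : (X ^ q - X : F[X]).Monic) (hdΛ : (X ^ q - X : F[X]).degree = (q : ℕ))
    (A : F[X]) (k m : ℕ)
    (hA : A = ∑ i ∈ range (m+1), Bseq (X ^ q - X) A i * (X ^ q - X) ^ i)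
    (hpdeg : ∀ ℓ : ℕ, ((hasseDeriv ℓ A) %ₘ (X ^ q - X)).degree ≤ (k : WithBot ℕ)) :
    ∀ ℓ, ℓ ≤ m → (Bseq (X ^ q - X) A ℓ).degree ≤ (k : WithBot ℕ) := by
  have hq2 : 1 < q := hqe ▸ Nat.one_lt_pow he hp.one_lt
  intro ℓ
  induction ℓ using Nat.strong_induction_on with
  | _ ℓ IH =>
    intro hℓm
    set T : ℕ → F[X] := fun i => ∑ ab ∈ antidiagonal ℓ,
      C ((((X : F[X]) ^ q - X) ^ i).coeff ab.2) * hasseDeriv ab.1 (Bseq (X ^ q - X) A i)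
      with hTdef
    have hS : (∑ i ∈ range (m+1), T i).degree ≤ (k : WithBot ℕ) := by
      rw [hTdef, ← Sl_eq p e q hp he hqe hΛ hdΛ A m hA ℓ]
      exact hpdeg ℓ
    have hTℓ : T ℓ = C ((-1 : F) ^ ℓ) * Bseq (X ^ q - X) A ℓ := by
      rw [hTdef]
      simp only
      rw [Finset.sum_eq_single_of_mem (0, ℓ) (by simp)]
      · rw [lam_pow_coeff_self q hq2, hasseDeriv_zero']
      · rintro ⟨a, b⟩ hab hne
        have h1 : a + b = ℓ := Finset.HasAntidiagonal.mem_antidiagonal.mp hab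
        have hb : b < ℓ := by
          rcases Nat.lt_or_ge b ℓ with h | h
          · exact h
          · exfalso
            apply hne
            have hbℓ : b = ℓ := by omega
            have ha : a = 0 := by omega
            rw [ha, hbℓ]
        rw [lam_pow_coeff_lt q hq2 ℓ b hb, map_zero, zero_mul]
    have hT0 : ∀ i, ℓ < i → T i = 0 := fun i hi => by
      rw [hTdef]
      refine Finset.sum_eq_zero fun ab hab => ?_
      have h1 : ab.1 + ab.2 = ℓ := Finset.HasAntidiagonal.mem_antidiagonal.mp hab
      rw [lam_pow_coeff_lt q hq2 i ab.2 (by omega), map_zero, zero_mul]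
    have hTlt : ∀ i, i < ℓ → (T i).degree ≤ (k : WithBot ℕ) := fun i hi => by
      rw [hTdef]
      refine le_trans (degree_sum_le _ _) (Finset.sup_le fun ab _ => ?_)
      calc (C ((((X : F[X]) ^ q - X) ^ i).coeff ab.2)
              * hasseDeriv ab.1 (Bseq (X ^ q - X) A i)).degree
          ≤ (hasseDeriv ab.1 (Bseq (X ^ q - X) A i)).degree := by
            rw [← smul_eq_C_mul]; exact degree_smul_le _ _
        _ ≤ (Bseq (X ^ q - X) A i).degree := degree_hasseDeriv_le' _ _
        _ ≤ (k : WithBot ℕ) := IH i hi (by omega)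
    have hmem : ℓ ∈ range (m+1) := mem_range.mpr (by omega)
    have hsplit : C ((-1 : F) ^ ℓ) * Bseq (X ^ q - X) A ℓ
        = (∑ i ∈ range (m+1), T i) - ∑ i ∈ (range (m+1)).erase ℓ, T i := by
      rw [← Finset.add_sum_erase _ T hmem, hTℓ]
      ring
    have herase : (∑ i ∈ (range (m+1)).erase ℓ, T i).degree ≤ (k : WithBot ℕ) := by
      refine le_trans (degree_sum_le _ _) (Finset.sup_le fun i hi => ?_)
      have hne := (Finset.mem_erase.mp hi).1
      rcases Nat.lt_or_ge i ℓ with h | h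
      · exact hTlt i h
      · have hlt : ℓ < i := by omega
        rw [hT0 i hlt]
        simp
    have hfinal : (C ((-1 : F) ^ ℓ) * Bseq (X ^ q - X) A ℓ).degree ≤ (k : WithBot ℕ) := by
      rw [hsplit]
      exact le_trans (degree_sub_le _ _) (max_le hS herase)
    have hBrw : Bseq (X ^ q - X) A ℓ
        = C (((-1 : F) ^ ℓ)⁻¹) * (C ((-1 : F) ^ ℓ) * Bseq (X ^ q - X) A ℓ) := by
      rw [← mul_assoc, ← C_mul, inv_mul_cancel₀ (pow_ne_zero _ (neg_ne_zero.mpr one_ne_zero)),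
        C_1, one_mul]
    calc (Bseq (X ^ q - X) A ℓ).degree
        = (C (((-1 : F) ^ ℓ)⁻¹) * (C ((-1 : F) ^ ℓ) * Bseq (X ^ q - X) A ℓ)).degree := by
          rw [← hBrw]
      _ ≤ (C ((-1 : F) ^ ℓ) * Bseq (X ^ q - X) A ℓ).degree := by
          rw [← smul_eq_C_mul]; exact degree_smul_le _ _
      _ ≤ (k : WithBot ℕ) := hfinal

set_option maxRecDepth 4000 in
lemma assemble (q m k : ℕ) (hq2 : 1 < q) (B : ℕ → F[X]) (A : F[X])
    (hA : A = ∑ i ∈ range (m+1), B i * ((X : F[X]) ^ q - X) ^ i)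
    (hB : ∀ i, i ≤ m → (B i).degree ≤ (k : WithBot ℕ)) :
    ∃ Ahat : ℕ → F[X], (∀ i, (Ahat i).degree ≤ ((k + m : ℕ) : WithBot ℕ)) ∧
      A = ∑ j ∈ range (m+1), Ahat j * X ^ (j * q) := by
  refine ⟨fun j => ∑ i ∈ range (m+1),
    C ((-1 : F) ^ (i - j) * (i.choose j : F)) * X ^ (i - j) * B i, ?_, ?_⟩
  · intro j
    refine le_trans (degree_sum_le _ _) (Finset.sup_le fun i hi => ?_)
    have him : i ≤ m := by have := mem_range.mp hi; omega
    calc (C ((-1 : F) ^ (i - j) * (i.choose j : F)) * X ^ (i - j) * B i).degree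
        ≤ (C ((-1 : F) ^ (i - j) * (i.choose j : F)) * X ^ (i - j)).degree + (B i).degree :=
          degree_mul_le _ _
      _ ≤ ((i - j : ℕ) : WithBot ℕ) + ((k : ℕ) : WithBot ℕ) :=
          add_le_add (degree_C_mul_X_pow_le _ _) (hB i him)
      _ = (((i - j) + k : ℕ) : WithBot ℕ) := by push_cast; rfl
      _ ≤ ((k + m : ℕ) : WithBot ℕ) := by exact_mod_cast (by omega : (i - j) + k ≤ k + m)
  · rw [hA]
    have hlam : ∀ i, i ≤ m → ((X : F[X]) ^ q - X) ^ i
        = ∑ j ∈ range (m+1), (X ^ q) ^ j * (-X) ^ (i - j) * (i.choose j : F[X]) := by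
      intro i hi
      rw [sub_eq_add_neg, add_pow]
      refine Finset.sum_subset (by intro x hx; simp only [mem_range] at hx ⊢; omega) ?_
      intro j hj hji
      have hij : i < j := by simp only [mem_range] at hj hji; omega
      rw [Nat.choose_eq_zero_of_lt hij]
      simp
    rw [Finset.sum_congr rfl fun i hi => by
      rw [hlam i (by have := mem_range.mp hi; omega)]]
    simp_rw [Finset.mul_sum]
    rw [Finset.sum_comm]
    refine Finset.sum_congr rfl fun j hj => ?_
    rw [Finset.sum_mul]
    refine Finset.sum_congr rfl fun i hi => ?_
    rw [neg_pow (X : F[X])]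
    simp only [map_mul, map_pow, map_neg, C_1, C_eq_natCast]
    ring


end Aux

/-- If `A` has pseudodegree at most `k` and degree at most `D`, then
`A = Σ_{i=0}^{⌊D/q⌋} Â_i · X^(iq)` for polynomials `Â_i` of degree at most `k + ⌊D/q⌋`. -/
theorem stmt7 {F : Type*} [Field F] [Fintype F] (q : ℕ) (hq : Fintype.card F = q)
    (A : F[X]) (k D : ℕ) (hpdeg : PdegLE q A k) (hdeg : A.degree ≤ (D : ℕ)) :
    ∃ Ahat : ℕ → F[X],
      (∀ i, (Ahat i).degree ≤ ((k + D / q : ℕ) : WithBot ℕ)) ∧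
      A = ∑ i ∈ Finset.range (D / q + 1), Ahat i * X ^ (i * q) := by
  classical
  have hq2 : 1 < q := hq ▸ Fintype.one_lt_card
  haveI : CharP F (ringChar F) := ringChar.charP F
  obtain ⟨n, hp, hcard⟩ := FiniteField.card F (ringChar F)
  have hqe : q = ringChar F ^ (n : ℕ) := by rw [← hq, hcard]
  have hmonic : (X ^ q - X : F[X]).Monic :=
    monic_X_pow_sub (by rw [degree_X]; exact_mod_cast hq2)
  have hdΛ : (X ^ q - X : F[X]).degree = ((q : ℕ) : WithBot ℕ) := by
    rw [degree_sub_eq_left_of_degree_lt ?h, degree_X_pow]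
    case h => rw [degree_X_pow, degree_X]; exact_mod_cast hq2
  have hndΛ : (X ^ q - X : F[X]).natDegree = q := natDegree_eq_of_degree_eq_some hdΛ
  have hA : A = ∑ i ∈ Finset.range (D / q + 1),
      Bseq (X ^ q - X) A i * (X ^ q - X) ^ i := by
    have h := decomp (X ^ q - X) A hmonic (D / q + 1)
    rw [Rseq_eq_zero _ A hmonic q D (by omega) hndΛ hdeg, zero_mul, add_zero] at h
    exact h
  have hB := degree_Bseq_le (ringChar F) (n : ℕ) q hp (by exact_mod_cast n.pos.ne') hqe
    hmonic hdΛ A k (D / q) hA hpdeg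
  exact assemble q (D / q) k hq2 (Bseq (X ^ q - X) A) A hA hB
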